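/- For all integers n ≥ 0, d_3(5n+3) ≡ 0 (mod 5) and d_3(5n+4) ≡ 0 (mod 5). -/

import Mathlib

namespace D3aux
open Polynomial Finset

open Polynomial Finset

/-- triangular numbers -/
def T : ℕ → ℕ
  | 0 => 0
  | n+1 => T n + n + 1

lemma two_T (n : ℕ) : 2 * T n = n * (n+1) := by
  induction n with
  | zero => rfl
  | succ k ih => simp only [T]; ring_nf; ring_nf at ih; omega

/-- Gaussian binomial coefficients over ℤ, via the q-Pascal recurrence. -/
noncomputable def gb : ℕ → ℕ → Polynomial ℤ
  | _, 0 => 1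
  | 0, _+1 => 0
  | M+1, m+1 => gb M (m+1) + X ^ (M - m) * gb M m

@[simp] lemma gb_zero_right (M : ℕ) : gb M 0 = 1 := by cases M <;> rfl

@[simp] lemma gb_zero_succ (m : ℕ) : gb 0 (m+1) = 0 := rfl

lemma gb_succ_succ (M m : ℕ) : gb (M+1) (m+1) = gb M (m+1) + X ^ (M - m) * gb M m := rfl

lemma gb_eq_zero : ∀ {M m : ℕ}, M < m → gb M m = 0 := by
  intro M
  induction M with
  | zero => intro m h; cases m with | zero => omega | succ k => rfl
  | succ K ih =>
    intro m h
    cases m with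
    | zero => omega
    | succ k =>
      rw [gb_succ_succ, ih (by omega), ih (by omega)]
      simp

@[simp] lemma gb_self : ∀ M : ℕ, gb M M = 1 := by
  intro M
  induction M with
  | zero => rfl
  | succ K ih => rw [gb_succ_succ, gb_eq_zero (by omega), ih]; simp

lemma gb_one (M : ℕ) : gb M 1 = ∑ i ∈ range M, X ^ i := by
  induction M with
  | zero => simp [gb_eq_zero]
  | succ K ih =>
    rw [gb_succ_succ, ih, Finset.sum_range_succ]
    simp [add_comm]

/-- the finite Euler products ∏_{i=1}^j (1 - X^i)  -/
noncomputable def P (j : ℕ) : Polynomial ℤ := ∏ i ∈ range j, (1 - X ^ (i+1))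

@[simp] lemma P_zero : P 0 = 1 := by simp [P]

lemma P_succ (j : ℕ) : P (j+1) = P j * (1 - X ^ (j+1)) := Finset.prod_range_succ _ _

/-- finite Euler identity -/
lemma euler : ∀ M : ℕ, ∑ r ∈ range (M+1), (-1 : Polynomial ℤ)^r * X ^ (T r) * gb M r = P M := by
  intro M
  induction M with
  | zero => simp [T]
  | succ K ih =>
    rw [Finset.sum_range_succ' (fun r => (-1 : Polynomial ℤ)^r * X ^ (T r) * gb (K+1) r)]
    have expand : ∀ r ∈ range (K+1),
        (-1 : Polynomial ℤ)^(r+1) * X ^ (T (r+1)) * gb (K+1) (r+1)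
        = (-1 : Polynomial ℤ)^(r+1) * X ^ (T (r+1)) * gb K (r+1)
          + (- X^(K+1)) * ((-1 : Polynomial ℤ)^r * X ^ (T r) * gb K r) := by
      intro r hr
      simp only [Finset.mem_range] at hr
      rw [gb_succ_succ]
      have hTr : T (r+1) + (K - r) = T r + (K+1) := by simp only [T]; omega
      have h : X ^ (T (r+1)) * (X ^ (K - r) * gb K r) = X ^ (T r) * X^(K+1) * gb K r := by
        rw [← mul_assoc, ← pow_add, hTr, pow_add]; try ring
      calc (-1 : Polynomial ℤ)^(r+1) * X ^ (T (r+1)) * (gb K (r+1) + X ^ (K - r) * gb K r)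
          = (-1 : Polynomial ℤ)^(r+1) * X ^ (T (r+1)) * gb K (r+1)
            + (-1 : Polynomial ℤ)^(r+1) * (X ^ (T (r+1)) * (X ^ (K - r) * gb K r)) := by ring
        _ = _ := by rw [h, pow_succ]; try ring
    rw [Finset.sum_congr rfl expand, Finset.sum_add_distrib, ← Finset.mul_sum, ih]
    have h2 : (∑ r ∈ range (K+1), (-1 : Polynomial ℤ)^(r+1) * X ^ (T (r+1)) * gb K (r+1))
        + ((-1 : Polynomial ℤ)^0 * X ^ (T 0) * gb (K+1) 0)
        = ∑ r ∈ range (K+2), (-1 : Polynomial ℤ)^r * X ^ (T r) * gb K r := by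
      rw [Finset.sum_range_succ' (fun r => (-1 : Polynomial ℤ)^r * X ^ (T r) * gb K r)]
      simp [T]
    have h3 : ∑ r ∈ range (K+2), (-1 : Polynomial ℤ)^r * X ^ (T r) * gb K r
        = ∑ r ∈ range (K+1), (-1 : Polynomial ℤ)^r * X ^ (T r) * gb K r := by
      rw [Finset.sum_range_succ, gb_eq_zero (by omega)]; simp
    rw [add_right_comm, h2, h3, ih, P_succ]
    ring


section TwoVar

/-- coefficient extraction against a linear factor -/
lemma coeff_mul_linear {R : Type*} [CommRing R] (p : Polynomial R) (c : R) :
    ∀ m : ℕ, (p * (1 + Polynomial.C c * Polynomial.X)).coeff m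
      = p.coeff m + c * (if m = 0 then 0 else p.coeff (m-1)) := by
  have hrw : p * (1 + Polynomial.C c * Polynomial.X) = p + Polynomial.C c * (p * Polynomial.X) := by
    ring
  intro m
  cases m with
  | zero => simp [hrw]
  | succ k => simp [hrw, Polynomial.coeff_mul_X]

/-- the two-variable product ∏_{j=0}^{M-1} (1 + q^(a+1+j) z) -/
noncomputable def Phi (a M : ℕ) : Polynomial (Polynomial ℤ) :=
  ∏ j ∈ range M, (1 + Polynomial.C ((X : Polynomial ℤ)^(a+1+j)) * Polynomial.X)

lemma Phi_succ (a M : ℕ) :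
    Phi a (M+1) = Phi a M * (1 + Polynomial.C ((X : Polynomial ℤ)^(a+1+M)) * Polynomial.X) :=
  Finset.prod_range_succ _ _

lemma Phi_peel (a M : ℕ) :
    Phi a (M+1) = Phi (a+1) M * (1 + Polynomial.C ((X : Polynomial ℤ)^(a+1)) * Polynomial.X) := by
  have h : Phi (a+1) M
      = ∏ j ∈ range M, (1 + Polynomial.C ((X : Polynomial ℤ)^(a+1+(j+1))) * Polynomial.X) :=
    Finset.prod_congr rfl (fun j _ => by rw [show (a+1)+1+j = a+1+(j+1) by omega])
  rw [Phi, Finset.prod_range_succ' _ M, h, Nat.add_zero]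

lemma coeff_Phi : ∀ M a m : ℕ, (Phi a M).coeff m = X^(a*m + T m) * gb M m := by
  intro M
  induction M with
  | zero =>
    intro a m
    cases m with
    | zero => simp [Phi, T]
    | succ k => simp [Phi, Polynomial.coeff_one, gb_eq_zero (by omega : (0:ℕ) < k+1)]
  | succ K ih =>
    intro a m
    rw [Phi_succ, coeff_mul_linear]
    cases m with
    | zero => simp [ih]
    | succ k =>
      simp only [Nat.succ_ne_zero, if_false, Nat.add_sub_cancel]
      rw [ih, ih]
      rcases le_or_gt k K with h | h
      · have hT : (a+1+K) + (a*k + T k) = a*(k+1) + T (k+1) + (K - k) := by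
          simp only [T]; ring_nf; omega
        rw [gb_succ_succ, mul_add]
        congr 1
        rw [← mul_assoc, ← pow_add, hT, pow_add]
        ring
      · rw [gb_eq_zero (by omega : K < k+1), gb_eq_zero (by omega : K < k),
          gb_eq_zero (by omega : K+1 < k+1)]
        simp

end TwoVar

/-- second q-Pascal recurrence -/
lemma pascal2 (M m : ℕ) : gb (M+1) (m+1) = X ^ (m+1) * gb M (m+1) + gb M m := by
  have h1 := coeff_Phi (M+1) 0 (m+1)
  rw [Phi_peel, coeff_mul_linear] at h1
  simp only [Nat.succ_ne_zero, if_false, Nat.add_sub_cancel] at h1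
  rw [coeff_Phi, coeff_Phi] at h1
  have e1 : (0:ℕ)*(m+1) + T (m+1) = T (m+1) := by omega
  have e2 : (1:ℕ)*(m+1) + T (m+1) = T (m+1) + (m+1) := by omega
  have e3 : (1:ℕ)*m + T m = m + T m := by omega
  rw [e1, e2, e3] at h1
  have e4 : (X : Polynomial ℤ)^(0+1) * (X^(m + T m) * gb M m) = X^(T (m+1)) * gb M m := by
    rw [← mul_assoc, ← pow_add, show 0+1+(m + T m) = T (m+1) from by simp [T]; omega]
  have e5 : (X : Polynomial ℤ)^(T (m+1) + (m+1)) * gb M (m+1)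
      = X^(T (m+1)) * (X^(m+1) * gb M (m+1)) := by
    rw [← mul_assoc, ← pow_add]
  rw [e4, e5, ← mul_add] at h1
  exact mul_left_cancel₀ (pow_ne_zero _ Polynomial.X_ne_zero) h1.symm

lemma gb_symm : ∀ M m : ℕ, m ≤ M → gb M m = gb M (M - m) := by
  intro M
  induction M with
  | zero => intro m h; interval_cases m; simp
  | succ K ih =>
    intro m hm
    cases m with
    | zero => simp
    | succ k =>
      rcases Nat.lt_or_ge k K with h | h
      · have e1 : K + 1 - (k+1) = (K - (k+1)) + 1 := by omega
        rw [gb_succ_succ, e1, pascal2]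
        have e2 : K - (k+1) + 1 = K - k := by omega
        rw [e2]
        have i1 : gb K (K - k) = gb K k := by
          rw [ih (K - k) (by omega), show K - (K - k) = k from by omega]
        have i2 : gb K (K - (k+1)) = gb K (k+1) := (ih (k+1) (by omega)).symm
        rw [i1, i2]; ring
      · have hkK : k = K := by omega
        subst hkK
        simp

/-- reversed finite Euler -/
lemma identityD (M : ℕ) :
    ∑ r ∈ range (M+1), (-1 : Polynomial ℤ)^r * X ^ (T (M - r)) * gb M r
      = (-1)^M * P M := by
  rw [← Finset.sum_range_reflect (fun r => (-1 : Polynomial ℤ)^r * X ^ (T (M - r)) * gb M r) (M+1)]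
  have congrs : ∀ r ∈ range (M+1),
      (-1 : Polynomial ℤ)^(M + 1 - 1 - r) * X ^ (T (M - (M + 1 - 1 - r))) * gb M (M + 1 - 1 - r)
      = (-1)^M * ((-1 : Polynomial ℤ)^r * X ^ (T r) * gb M r) := by
    intro r hr
    simp only [Finset.mem_range] at hr
    have e1 : M + 1 - 1 - r = M - r := by omega
    have e2 : M - (M - r) = r := by omega
    have e3 : (-1 : Polynomial ℤ)^(M - r) = (-1)^M * (-1)^r := by
      have e4 : M - r + r = M := by omega
      calc (-1 : Polynomial ℤ)^(M - r) = (-1)^(M-r) * ((-1)^r * (-1)^r) := by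
            rw [← pow_add]; simp [← two_mul, pow_mul]
        _ = (-1)^M * (-1)^r := by rw [← mul_assoc, ← pow_add, e4]
    rw [e1, e2, e3, ← gb_symm M r (by omega)]
    ring
  rw [Finset.sum_congr rfl congrs, ← Finset.mul_sum, euler]

/-- key product identity for Gaussian binomials -/
lemma gbP : ∀ M m : ℕ, m ≤ M → gb M m * P m * P (M - m) = P M := by
  intro M
  induction M with
  | zero => intro m h; interval_cases m; simp
  | succ K ih =>
    intro m hm
    cases m with
    | zero => simp
    | succ k =>
      rcases Nat.lt_or_ge k K with h | h
      · have i1 : gb K (k+1) * P (k+1) * P (K - (k+1)) = P K := ih (k+1) (by omega)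
        have i2 : gb K k * P k * P (K - k) = P K := ih k (by omega)
        have e2 : K - (k+1) + 1 = K - k := by omega
        have e3 : K - k + (k + 1) = K + 1 := by omega
        have hPKk : P (K - k) = P (K - (k+1)) * (1 - X ^ (K - k)) := by
          rw [← e2, P_succ]
        calc gb (K+1) (k+1) * P (k+1) * P (K+1-(k+1))
            = (gb K (k+1) + X^(K-k) * gb K k) * P (k+1) * P ((K-(k+1))+1) := by
              rw [gb_succ_succ]; congr 2; omega
          _ = (gb K (k+1) * P (k+1) * P (K-(k+1))) * (1 - X^(K-k))
              + (X^(K-k) * gb K k) * P (k+1) * P (K-(k+1)) * (1 - X^(K-k)) := by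
              rw [P_succ (K-(k+1)), e2]; ring
          _ = P K * (1 - X^(K-k))
              + (X^(K-k) * gb K k) * P (k+1) * P (K-(k+1)) * (1 - X^(K-k)) := by rw [i1]
          _ = P K * (1 - X^(K-k)) + X^(K-k) * (1 - X^(k+1)) * (gb K k * P k * P (K-k)) := by
              rw [hPKk, P_succ k]; ring
          _ = P K * (1 - X^(K-k)) + X^(K-k) * (1 - X^(k+1)) * P K := by rw [i2]
          _ = P K * (1 - (X^(K-k) * X^(k+1))) := by ring
          _ = P (K+1) := by rw [← pow_add, e3, P_succ]; try ring
      · have hkK : k = K := by omega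
        subst hkK
        simp [Nat.sub_self]




/-! ### the finite Jacobi cube identity -/

lemma expo1 (N r : ℕ) (h : r + 1 ≤ N) : N*r + T (N-1-r) = T (N-1) + T r := by
  obtain ⟨k, rfl⟩ : ∃ k, N = r + 1 + k := ⟨N - (r+1), by omega⟩
  have h1 : r + 1 + k - 1 - r = k := by omega
  have h2 : r + 1 + k - 1 = r + k := by omega
  rw [h1, h2]
  have key : 2*((r+1+k)*r + T k) = 2*(T (r+k) + T r) := by
    simp only [Nat.mul_add, two_T]; ring
  exact Nat.eq_of_mul_eq_mul_left (by norm_num) key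

def ee (N m : ℕ) : ℕ := if N ≤ m then T (m - N) else T (N - 1 - m)

lemma expo2 (N m : ℕ) (hN : 1 ≤ N) : N*m + ee N m = T (N-1) + T m := by
  unfold ee
  split_ifs with h
  · obtain ⟨k, rfl⟩ : ∃ k, m = N + k := ⟨m - N, by omega⟩
    obtain ⟨j, rfl⟩ : ∃ j, N = j + 1 := ⟨N - 1, by omega⟩
    rw [show j + 1 + k - (j + 1) = k from by omega, show j + 1 - 1 = j from by omega]
    have key : 2*((j+1)*(j+1+k) + T k) = 2*(T j + T (j+1+k)) := by
      simp only [Nat.mul_add, two_T]; ring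
    exact Nat.eq_of_mul_eq_mul_left (by norm_num) key
  · exact expo1 N m (by omega)

noncomputable def beta (N l : ℕ) : Polynomial ℤ :=
  ∑ p ∈ Finset.HasAntidiagonal.antidiagonal l, X^(T (N-1-p.1) + T p.2) * (gb (N-1) p.1 * gb N p.2)

lemma Phi_split (N : ℕ) (hN : 1 ≤ N) :
    Phi 0 (2*N) = (Phi 0 (N-1) * Phi N N)
      * (1 + Polynomial.C ((X : Polynomial ℤ)^N) * Polynomial.X) := by
  have hsecond : ∏ j ∈ range (N+1),
        (1 + Polynomial.C ((X:Polynomial ℤ)^(0+1+((N-1)+j))) * Polynomial.X)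
      = Phi N N * (1 + Polynomial.C ((X:Polynomial ℤ)^N) * Polynomial.X) := by
    have hc : ∀ j ∈ range (N+1),
        (1 + Polynomial.C ((X:Polynomial ℤ)^(0+1+((N-1)+j))) * Polynomial.X)
        = (1 + Polynomial.C ((X:Polynomial ℤ)^(N+j)) * Polynomial.X) := by
      intro j _
      rw [show 0+1+((N-1)+j) = N+j from by omega]
    rw [Finset.prod_congr rfl hc, Finset.prod_range_succ' _ N]
    have h1 : ∀ j ∈ range N,
        (1 + Polynomial.C ((X:Polynomial ℤ)^(N+(j+1))) * Polynomial.X)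
        = (1 + Polynomial.C ((X:Polynomial ℤ)^(N+1+j)) * Polynomial.X) :=
      fun j _ => by rw [show N+(j+1) = N+1+j from by omega]
    rw [Finset.prod_congr rfl h1, Nat.add_zero]
    rfl
  calc Phi 0 (2*N) = Phi 0 ((N-1)+(N+1)) := by rw [show 2*N = (N-1)+(N+1) from by omega]
    _ = Phi 0 (N-1) * ∏ j ∈ range (N+1),
          (1 + Polynomial.C ((X:Polynomial ℤ)^(0+1+((N-1)+j))) * Polynomial.X) :=
        Finset.prod_range_add _ _ _
    _ = Phi 0 (N-1) * (Phi N N * (1 + Polynomial.C ((X:Polynomial ℤ)^N) * Polynomial.X)) := by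
        rw [hsecond]
    _ = _ := by ring

lemma betaX (N l : ℕ) (hN : 1 ≤ N) :
    X^(N*l) * beta N l = X^(T (N-1)) * (Phi 0 (N-1) * Phi N N).coeff l := by
  rw [Polynomial.coeff_mul, beta, Finset.mul_sum, Finset.mul_sum]
  refine Finset.sum_congr rfl ?_
  rintro ⟨r, s⟩ hp
  have hrs : r + s = l := Finset.HasAntidiagonal.mem_antidiagonal.mp hp
  dsimp only
  rw [coeff_Phi, coeff_Phi]
  rcases le_or_gt (r+1) N with h | h
  · have hexp : N*l + (T (N-1-r) + T s) = T (N-1) + ((0*r + T r) + (N*s + T s)) := by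
      have h1 := expo1 N r h
      have h2 : N*l = N*r + N*s := by rw [← hrs]; ring
      have h3 : (0:ℕ)*r = 0 := by ring
      linarith
    calc (X:Polynomial ℤ)^(N*l) * (X^(T (N-1-r) + T s) * (gb (N-1) r * gb N s))
        = X ^ (N*l + (T (N-1-r) + T s)) * (gb (N-1) r * gb N s) := by
          rw [← mul_assoc, ← pow_add]
      _ = X ^ (T (N-1) + ((0*r + T r) + (N*s + T s))) * (gb (N-1) r * gb N s) := by rw [hexp]
      _ = _ := by rw [pow_add, pow_add, pow_add]; ring
  · rw [gb_eq_zero (by omega : N - 1 < r)]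
    ring

lemma beta_zero (N : ℕ) (hN : 1 ≤ N) : beta N 0 = X^(T (N-1)) := by
  rw [beta]
  simp [T]

lemma beta_top (N : ℕ) (hN : 1 ≤ N) : beta N (2*N) = 0 := by
  rw [beta]
  refine Finset.sum_eq_zero ?_
  rintro ⟨r, s⟩ hp
  have hrs : r + s = 2*N := Finset.HasAntidiagonal.mem_antidiagonal.mp hp
  rcases le_or_gt s N with h | h
  · rw [gb_eq_zero (by omega : N - 1 < r)]; ring
  · rw [gb_eq_zero (by omega : N < s)]; ring

lemma relC0 (N : ℕ) (hN : 1 ≤ N) : (X:Polynomial ℤ)^(ee N 0) * gb (2*N) 0 = beta N 0 := by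
  unfold ee
  rw [if_neg (by omega), beta_zero N hN]
  simp

lemma relCsucc (N : ℕ) (hN : 1 ≤ N) (k : ℕ) :
    (X:Polynomial ℤ)^(ee N (k+1)) * gb (2*N) (k+1) = beta N (k+1) + beta N k := by
  have hcan : ∀ u v : Polynomial ℤ, X^(N*(k+1)) * u = X^(N*(k+1)) * v → u = v :=
    fun u v h => mul_left_cancel₀ (pow_ne_zero _ Polynomial.X_ne_zero) h
  apply hcan
  have hmain : X^(N*(k+1)) * (X^(ee N (k+1)) * gb (2*N) (k+1))
      = X^(T (N-1)) * (Phi 0 (2*N)).coeff (k+1) := by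
    rw [← mul_assoc, ← pow_add, expo2 N (k+1) hN, coeff_Phi]
    rw [show (0*(k+1) + T (k+1) : ℕ) = T (k+1) from by omega, pow_add]
    ring
  rw [hmain, Phi_split N hN, coeff_mul_linear]
  simp only [Nat.succ_ne_zero, if_false, Nat.add_sub_cancel]
  rw [mul_add, ← betaX N (k+1) hN]
  have h2 : (X:Polynomial ℤ)^(T (N-1)) * ((X:Polynomial ℤ)^N * (Phi 0 (N-1) * Phi N N).coeff k)
      = X^(N*(k+1)) * beta N k := by
    calc (X:Polynomial ℤ)^(T (N-1)) * ((X:Polynomial ℤ)^N * (Phi 0 (N-1) * Phi N N).coeff k)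
        = (X:Polynomial ℤ)^N * ((X:Polynomial ℤ)^(T (N-1)) * (Phi 0 (N-1) * Phi N N).coeff k) := by
          ring
      _ = (X:Polynomial ℤ)^N * ((X:Polynomial ℤ)^(N*k) * beta N k) := by rw [← betaX N k hN]
      _ = X^(N*(k+1)) * beta N k := by
          rw [← mul_assoc, ← pow_add, show N + N*k = N*(k+1) from by ring]
  rw [h2, mul_add]
  exact (mul_add _ _ _).symm

lemma Cpow' (k : ℕ) : Polynomial.C ((-1:ℤ)^k) = (-1 : Polynomial ℤ)^k := by
  rw [map_pow, map_neg, map_one]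

lemma cauchy (N : ℕ) (hN : 1 ≤ N) :
    ∑ l ∈ range (2*N+1), Polynomial.C ((-1:ℤ)^l) * beta N l
      = (Polynomial.C ((-1:ℤ)^(N-1)) * P (N-1)) * P N := by
  classical
  set u : Polynomial (Polynomial ℤ) :=
    ∑ r ∈ range (2*N+1), Polynomial.monomial r (X^(T (N-1-r)) * gb (N-1) r) with hu
  set v : Polynomial (Polynomial ℤ) :=
    ∑ s ∈ range (2*N+1), Polynomial.monomial s (X^(T s) * gb N s) with hv
  have coeff_u : ∀ t : ℕ, u.coeff t
      = if t ≤ 2*N then X^(T (N-1-t)) * gb (N-1) t else 0 := by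
    intro t
    rw [hu, Polynomial.finset_sum_coeff]
    simp only [Polynomial.coeff_monomial]
    split_ifs with h
    · rw [Finset.sum_eq_single t]
      · simp
      · intro b _ hb; simp [hb]
      · intro hb; exact absurd (Finset.mem_range.mpr (by omega)) hb
    · refine Finset.sum_eq_zero ?_
      intro b hb
      simp only [Finset.mem_range] at hb
      rw [if_neg (by omega)]
  have coeff_v : ∀ t : ℕ, v.coeff t
      = if t ≤ 2*N then X^(T t) * gb N t else 0 := by
    intro t
    rw [hv, Polynomial.finset_sum_coeff]
    simp only [Polynomial.coeff_monomial]
    split_ifs with h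
    · rw [Finset.sum_eq_single t]
      · simp
      · intro b _ hb; simp [hb]
      · intro hb; exact absurd (Finset.mem_range.mpr (by omega)) hb
    · refine Finset.sum_eq_zero ?_
      intro b hb
      simp only [Finset.mem_range] at hb
      rw [if_neg (by omega)]
  have coeff_uv : ∀ l : ℕ, (u * v).coeff l = if l ≤ 2*N then beta N l else 0 := by
    intro l
    rw [Polynomial.coeff_mul]
    split_ifs with h
    · rw [beta]
      refine Finset.sum_congr rfl ?_
      rintro ⟨r, s⟩ hp
      have hrs : r + s = l := Finset.HasAntidiagonal.mem_antidiagonal.mp hp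
      rw [coeff_u, coeff_v, if_pos (by omega), if_pos (by omega), pow_add]
      ring
    · refine Finset.sum_eq_zero ?_
      rintro ⟨r, s⟩ hp
      have hrs : r + s = l := Finset.HasAntidiagonal.mem_antidiagonal.mp hp
      rw [coeff_u, coeff_v]
      split_ifs with h1 h2
      · rcases le_or_gt r (N-1) with h3 | h3
        · rw [gb_eq_zero (show N < s from by omega)]; ring
        · rw [gb_eq_zero (show N-1 < r from h3)]; ring
      · ring
      · ring
      · ring
  have deg_u : u.natDegree ≤ 2*N := by
    refine Polynomial.natDegree_sum_le_of_forall_le _ _ ?_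
    intro r hr
    simp only [Finset.mem_range] at hr
    exact le_trans (Polynomial.natDegree_monomial_le _) (by omega)
  have deg_v : v.natDegree ≤ 2*N := by
    refine Polynomial.natDegree_sum_le_of_forall_le _ _ ?_
    intro r hr
    simp only [Finset.mem_range] at hr
    exact le_trans (Polynomial.natDegree_monomial_le _) (by omega)
  have deg_uv : (u*v).natDegree < 4*N + 2 :=
    lt_of_le_of_lt (Polynomial.natDegree_mul_le) (by omega)
  have heval := Polynomial.eval_eq_sum_range' deg_uv (-1 : Polynomial ℤ)
  have hL : Polynomial.eval (-1 : Polynomial ℤ) (u*v)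
      = ∑ l ∈ range (2*N+1), Polynomial.C ((-1:ℤ)^l) * beta N l := by
    rw [heval]
    rw [← Finset.sum_subset (Finset.range_subset_range.mpr (by omega : 2*N+1 ≤ 4*N+2))]
    · refine Finset.sum_congr rfl ?_
      intro l hl
      simp only [Finset.mem_range] at hl
      rw [coeff_uv, if_pos (by omega), map_pow, map_neg, map_one]
      ring
    · intro l _ hl
      simp only [Finset.mem_range] at hl
      rw [coeff_uv, if_neg (by omega), zero_mul]
  have hu_eval : Polynomial.eval (-1 : Polynomial ℤ) u
      = Polynomial.C ((-1:ℤ)^(N-1)) * P (N-1) := by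
    rw [hu, Polynomial.eval_finset_sum]
    simp only [Polynomial.eval_monomial]
    rw [← Finset.sum_subset (Finset.range_subset_range.mpr (by omega : (N-1)+1 ≤ 2*N+1))]
    · rw [Cpow' (N-1), ← identityD (N-1)]
      exact Finset.sum_congr rfl (fun r _ => by ring)
    · intro r _ hr
      simp only [Finset.mem_range] at hr
      rw [gb_eq_zero (show N-1 < r from by omega)]
      ring
  have hv_eval : Polynomial.eval (-1 : Polynomial ℤ) v = P N := by
    rw [hv, Polynomial.eval_finset_sum]
    simp only [Polynomial.eval_monomial]
    rw [← Finset.sum_subset (Finset.range_subset_range.mpr (by omega : N+1 ≤ 2*N+1))]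
    · rw [← euler N]
      exact Finset.sum_congr rfl (fun r _ => by ring)
    · intro r _ hr
      simp only [Finset.mem_range] at hr
      rw [gb_eq_zero (show N < r from by omega)]
      ring
  rw [← hL, Polynomial.eval_mul, hu_eval, hv_eval]

/-- the finite form of Jacobi's cube identity -/
theorem master (N : ℕ) (hN : 1 ≤ N) :
    ∑ m ∈ range (2*N+1),
        Polynomial.C ((-1:ℤ)^m * (2*(m:ℤ) - 2*N + 1)) * (X^(ee N m) * gb (2*N) m)
      = Polynomial.C (2*(-1:ℤ)^N) * (P (N-1) * P N) := by
  have step1 : ∀ m ∈ range (2*N+1),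
      Polynomial.C ((-1:ℤ)^m * (2*(m:ℤ) - 2*N + 1)) * (X^(ee N m) * gb (2*N) m)
      = Polynomial.C ((-1:ℤ)^m * (2*(m:ℤ) - 2*N + 1)) * beta N m
        + Polynomial.C ((-1:ℤ)^m * (2*(m:ℤ) - 2*N + 1))
          * (if m = 0 then 0 else beta N (m-1)) := by
    intro m _
    cases m with
    | zero => rw [relC0 N hN]; simp
    | succ k => rw [relCsucc N hN k]; simp [mul_add]
  rw [Finset.sum_congr rfl step1, Finset.sum_add_distrib]
  have hsum2 : ∑ m ∈ range (2*N+1),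
      Polynomial.C ((-1:ℤ)^m * (2*(m:ℤ) - 2*N + 1)) * (if m = 0 then 0 else beta N (m-1))
      = ∑ m ∈ range (2*N),
          Polynomial.C ((-1:ℤ)^(m+1) * (2*(((m+1:ℕ)):ℤ) - 2*N + 1)) * beta N m := by
    rw [Finset.sum_range_succ' (fun m => Polynomial.C ((-1:ℤ)^m * (2*(m:ℤ) - 2*N + 1))
      * (if m = 0 then 0 else beta N (m-1)))]
    simp only [if_pos rfl, eq_self_iff_true, if_true, mul_zero, add_zero, Nat.succ_ne_zero, if_false, Nat.add_sub_cancel]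
  have hsum1 : ∑ m ∈ range (2*N+1),
      Polynomial.C ((-1:ℤ)^m * (2*(m:ℤ) - 2*N + 1)) * beta N m
      = ∑ m ∈ range (2*N), Polynomial.C ((-1:ℤ)^m * (2*(m:ℤ) - 2*N + 1)) * beta N m := by
    rw [Finset.sum_range_succ, beta_top N hN, mul_zero, add_zero]
  rw [hsum1, hsum2, ← Finset.sum_add_distrib]
  have hcomb : ∀ m ∈ range (2*N),
      Polynomial.C ((-1:ℤ)^m * (2*(m:ℤ) - 2*N + 1)) * beta N m
        + Polynomial.C ((-1:ℤ)^(m+1) * (2*(((m+1:ℕ)):ℤ) - 2*N + 1)) * beta N m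
      = Polynomial.C (-2 : ℤ) * (Polynomial.C ((-1:ℤ)^m) * beta N m) := by
    intro m _
    have hz : ((-1:ℤ)^m * (2*(m:ℤ) - 2*N + 1)) + ((-1:ℤ)^(m+1) * (2*(((m+1:ℕ)):ℤ) - 2*N + 1))
        = (-2) * (-1:ℤ)^m := by push_cast; ring
    rw [← add_mul, ← map_add, hz, map_mul, mul_assoc]
  rw [Finset.sum_congr rfl hcomb, ← Finset.mul_sum]
  have hback : ∑ m ∈ range (2*N), Polynomial.C ((-1:ℤ)^m) * beta N m
      = ∑ m ∈ range (2*N+1), Polynomial.C ((-1:ℤ)^m) * beta N m := by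
    rw [Finset.sum_range_succ, beta_top N hN, mul_zero, add_zero]
  rw [hback, cauchy N hN]
  have hsign : (-2 : ℤ) * (-1:ℤ)^(N-1) = 2*(-1:ℤ)^N := by
    obtain ⟨j, rfl⟩ : ∃ j, N = j + 1 := ⟨N-1, by omega⟩
    rw [show j+1-1 = j from by omega, pow_succ]
    ring
  calc Polynomial.C (-2:ℤ) * ((Polynomial.C ((-1:ℤ)^(N-1)) * P (N-1)) * P N)
      = (Polynomial.C (-2:ℤ) * Polynomial.C ((-1:ℤ)^(N-1))) * (P (N-1) * P N) := by ring
    _ = Polynomial.C (2*(-1:ℤ)^N) * (P (N-1) * P N) := by rw [← map_mul, hsign]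


open PowerSeries


abbrev S5 := PowerSeries (ZMod 5)

noncomputable def pp : Polynomial ℤ →+* S5 :=
  Polynomial.eval₂RingHom ((PowerSeries.C (R := ZMod 5)).comp (Int.castRingHom (ZMod 5)))
    (PowerSeries.X ^ 2)

lemma pp_X : pp Polynomial.X = (X : S5) ^ 2 := Polynomial.eval₂_X _ _

lemma pp_C (a : ℤ) : pp (Polynomial.C a) = PowerSeries.C (R := ZMod 5) (a : ZMod 5) :=
  Polynomial.eval₂_C _ _

lemma pp_Xpow (a : ℕ) : pp (Polynomial.X ^ a) = (X : S5) ^ (2 * a) := by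
  rw [map_pow, pp_X, ← pow_mul]

/-- truncated equality of power series -/
def Rel (n : ℕ) (A B : S5) : Prop := ∀ k ≤ n, coeff (R := ZMod 5) k A = coeff (R := ZMod 5) k B

lemma rel_refl {n : ℕ} {A : S5} : Rel n A A := fun _ _ => Eq.refl _

lemma rel_symm {n : ℕ} {A B : S5} (h : Rel n A B) : Rel n B A := fun k hk => (h k hk).symm

lemma rel_trans {n : ℕ} {A B C : S5} (h1 : Rel n A B) (h2 : Rel n B C) : Rel n A C :=
  fun k hk => (h1 k hk).trans (h2 k hk)

lemma rel_mul {n : ℕ} {A B C D : S5} (h1 : Rel n A B) (h2 : Rel n C D) :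
    Rel n (A * C) (B * D) := by
  intro k hk
  rw [PowerSeries.coeff_mul, PowerSeries.coeff_mul]
  refine Finset.sum_congr (Eq.refl _) ?_
  rintro ⟨a, b⟩ hp
  have hab : a + b = k := Finset.HasAntidiagonal.mem_antidiagonal.mp hp
  rw [h1 a (by omega), h2 b (by omega)]

lemma coeff_Xpow_mul (f : S5) (e k : ℕ) :
    coeff (R := ZMod 5) k ((X : S5) ^ e * f) = if e ≤ k then coeff (R := ZMod 5) (k - e) f else 0 := by
  split_ifs with h
  · obtain ⟨j, rfl⟩ : ∃ j, k = j + e := ⟨k - e, by omega⟩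
    rw [PowerSeries.coeff_X_pow_mul, Nat.add_sub_cancel]
  · rw [PowerSeries.coeff_mul]
    refine Finset.sum_eq_zero ?_
    rintro ⟨a, b⟩ hp
    have hab : a + b = k := Finset.HasAntidiagonal.mem_antidiagonal.mp hp
    rw [PowerSeries.coeff_X_pow, if_neg (by omega), zero_mul]

/-- the image of the finite Euler product: `∏ (1 - X^(2i))` -/
noncomputable def Q (j : ℕ) : S5 := pp (P j)

lemma Q_succ (j : ℕ) : Q (j+1) = Q j * (1 - (X : S5) ^ (2*(j+1))) := by
  rw [Q, Q, P_succ, map_mul, map_sub, map_one, pp_Xpow]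

lemma Q_const (j : ℕ) : constantCoeff (R := ZMod 5) (Q j) = 1 := by
  induction j with
  | zero => simp [Q, P]
  | succ k ih =>
    rw [Q_succ, map_mul, ih, map_sub, map_one, map_pow, constantCoeff_X]
    norm_num

lemma relQ_step (n j : ℕ) (hj : n ≤ j) : ∀ k, Rel n (Q (j + k)) (Q j) := by
  intro k
  induction k with
  | zero => exact rel_refl
  | succ i ih =>
    have h1 : Rel n (1 - (X : S5) ^ (2*(j+i+1))) 1 := by
      intro k hk
      rw [map_sub, PowerSeries.coeff_X_pow, if_neg (by omega), sub_zero]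
    have h2 : Rel n (Q (j+i) * (1 - (X : S5)^(2*(j+i+1)))) (Q j * 1) := rel_mul ih h1
    rw [mul_one] at h2
    rw [show j + (i+1) = (j+i) + 1 from by omega, Q_succ]
    exact h2

lemma relQ (n j j' : ℕ) (hj : n ≤ j) (hj' : n ≤ j') : Rel n (Q j) (Q j') := by
  have a1 := relQ_step n j hj (0)
  have h1 : Rel n (Q j) (Q n) := by
    obtain ⟨k, rfl⟩ : ∃ k, j = n + k := ⟨j - n, by omega⟩
    exact relQ_step n n le_rfl k
  have h2 : Rel n (Q j') (Q n) := by
    obtain ⟨k, rfl⟩ : ∃ k, j' = n + k := ⟨j' - n, by omega⟩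
    exact relQ_step n n le_rfl k
  exact rel_trans h1 (rel_symm h2)

lemma T_ge (j : ℕ) : j ≤ T j := by
  induction j with
  | zero => simp [T]
  | succ k ih => simp only [T]; omega

lemma twoT_mod5 (j : ℕ) : (2 * T j) % 5 = 0 ∨ (2 * T j) % 5 = 1 ∨ (2 * T j) % 5 = 2 := by
  rw [two_T]
  obtain ⟨a, q, hq, rfl⟩ : ∃ a q, q < 5 ∧ j = 5*a + q :=
    ⟨j/5, j%5, Nat.mod_lt _ (by norm_num), by omega⟩
  have hexp : (5*a+q)*(5*a+q+1) = q*(q+1) + 5*(5*a*a + 2*a*q + a) := by ring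
  rw [hexp, Nat.add_mul_mod_self_left]
  interval_cases q <;> decide

lemma ee_cases (N m : ℕ) :
    (N ≤ m ∧ ee N m = T (m - N)) ∨ (m < N ∧ ee N m = T (N - 1 - m)) := by
  unfold ee
  split_ifs with h
  · exact Or.inl ⟨h, Eq.refl _⟩
  · exact Or.inr ⟨by omega, Eq.refl _⟩

lemma ee_isT (N m : ℕ) : ∃ j, ee N m = T j := by
  rcases ee_cases N m with ⟨_, h⟩ | ⟨_, h⟩
  · exact ⟨_, h⟩
  · exact ⟨_, h⟩

/-- main truncation lemma: `gb(2N, m) * Q N ≡ 1` in low degrees -/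
lemma gbQ_rel (N m n' : ℕ) (hm : m ≤ 2*N) (h1 : n' ≤ m) (h2 : n' ≤ 2*N - m) (h3 : n' ≤ N) :
    Rel n' (pp (gb (2*N) m) * Q N) 1 := by
  have hid : pp (gb (2*N) m) * Q m * Q (2*N - m) = Q (2*N) := by
    have h := congrArg pp (gbP (2*N) m hm)
    rw [map_mul, map_mul] at h
    exact h
  set g := pp (gb (2*N) m)
  set U := Q (2*N - m)
  have hU : U * PowerSeries.invOfUnit U 1 = 1 :=
    PowerSeries.mul_invOfUnit U 1 (by rw [Q_const]; rfl)
  set V := PowerSeries.invOfUnit U 1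
  have key : g * Q m = Q (2*N) * V := by
    calc g * Q m = (g * Q m) * (U * V) := by rw [hU, mul_one]
      _ = (g * Q m * U) * V := by ring
      _ = Q (2*N) * V := by rw [hid]
  have r1 : Rel n' (g * Q N) (g * Q m) := rel_mul rel_refl (relQ n' N m h3 h1)
  have r2 : Rel n' (Q (2*N) * V) (U * V) :=
    rel_mul (relQ n' (2*N) (2*N - m) (by omega) h2) rel_refl
  rw [key] at r1
  rw [hU] at r2
  exact rel_trans r1 r2

/-- KEY: coefficients of `(∏_{i=1}^M (1 - X^(2i)))^3` vanish at positions ≡ 3,4 mod 5 -/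
theorem key2 (n M : ℕ) (hnM : n ≤ M) (h5 : n % 5 = 3 ∨ n % 5 = 4) :
    coeff (R := ZMod 5) n ((Q M)^3) = 0 := by
  haveI : Fact (Nat.Prime 5) := ⟨by norm_num⟩
  set N := 2*n + 2 with hNdef
  have hN1 : 1 ≤ N := by omega
  have hmaster := congrArg pp (master N hN1)
  -- multiply by Q N and take coefficient n
  have hcoeff := congrArg (fun f => coeff (R := ZMod 5) n (f * Q N)) hmaster
  -- LHS analysis
  rw [map_sum, Finset.sum_mul, map_sum] at hcoeff
  have hterm : ∀ m ∈ range (2*N+1),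
      coeff (R := ZMod 5) n
        (pp (Polynomial.C ((-1:ℤ)^m * (2*(m:ℤ) - 2*N + 1))
          * (Polynomial.X^(ee N m) * gb (2*N) m)) * Q N) = 0 := by
    intro m hm
    simp only [Finset.mem_range] at hm
    have hexp : pp (Polynomial.C ((-1:ℤ)^m * (2*(m:ℤ) - 2*N + 1))
          * (Polynomial.X^(ee N m) * gb (2*N) m)) * Q N
        = PowerSeries.C (R := ZMod 5) (((-1:ℤ)^m * (2*(m:ℤ) - 2*N + 1) : ℤ) : ZMod 5)
          * ((X:S5)^(2 * ee N m) * (pp (gb (2*N) m) * Q N)) := by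
      rw [RingHom.map_mul pp (Polynomial.C _) _, RingHom.map_mul pp (Polynomial.X ^ _) _,
        pp_C, pp_Xpow]
      ring
    rw [hexp, PowerSeries.coeff_C_mul]
    rcases le_or_gt (2 * ee N m) n with hle | hgt
    · -- 2*ee ≤ n; show strict and use gbQ_rel
      have hne : 2 * ee N m ≠ n := by
        obtain ⟨j, hj⟩ := ee_isT N m
        rw [hj]
        intro hcontra
        rcases twoT_mod5 j with h | h | h <;> omega
      have hlt : 2 * ee N m < n := by omega
      set n' := n - 2 * ee N m with hn'
      have hn'pos : 1 ≤ n' := by omega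
      -- bounds for gbQ_rel
      have hTm : m ≤ 2*N ∧ n' ≤ m ∧ n' ≤ 2*N - m ∧ n' ≤ N := by
        rcases ee_cases N m with ⟨hc, hc2⟩ | ⟨hc, hc2⟩
        · have := T_ge (m - N)
          have hb : m - N ≤ ee N m := by omega
          constructor
          · omega
          · constructor
            · omega
            · constructor
              · omega
              · omega
        · have := T_ge (N - 1 - m)
          have hb : N - 1 - m ≤ ee N m := by omega
          refine ⟨by omega, by omega, by omega, by omega⟩
      obtain ⟨b1, b2, b3, b4⟩ := hTm
      have hrel := gbQ_rel N m n' b1 b2 b3 b4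
      rw [coeff_Xpow_mul, if_pos hle, ← hn']
      rw [hrel n' le_rfl, PowerSeries.coeff_one, if_neg (by omega), mul_zero]
    · rw [coeff_Xpow_mul, if_neg (by omega), mul_zero]
  rw [Finset.sum_congr (Eq.refl _) hterm, Finset.sum_const, smul_zero] at hcoeff
  -- RHS analysis
  have hexp2 : pp (Polynomial.C (2*(-1:ℤ)^N) * (P (N-1) * P N)) * Q N
      = PowerSeries.C (R := ZMod 5) ((2*(-1:ℤ)^N : ℤ) : ZMod 5)
        * (pp (P (N-1)) * pp (P N) * Q N) := by
    rw [RingHom.map_mul pp (Polynomial.C _) _, RingHom.map_mul pp (P _) _, pp_C]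
    ring
  rw [hexp2, PowerSeries.coeff_C_mul] at hcoeff
  have hrhs : coeff (R := ZMod 5) n (pp (P (N-1)) * pp (P N) * Q N)
      = coeff (R := ZMod 5) n ((Q M)^3) := by
    have r : Rel n (Q (N-1) * Q N * Q N) (Q M * Q M * Q M) :=
      rel_mul (rel_mul (relQ n (N-1) M (by omega) hnM) (relQ n N M (by omega) hnM))
        (relQ n N M (by omega) hnM)
    have hpow : (Q M)^3 = Q M * Q M * Q M := by ring
    rw [hpow]
    exact r n le_rfl
  rw [hrhs] at hcoeff
  -- conclude
  have hunit : ((2*(-1:ℤ)^N : ℤ) : ZMod 5) ≠ 0 := by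
    rw [Ne, ZMod.intCast_zmod_eq_zero_iff_dvd]
    rcases Nat.even_or_odd N with he | ho
    · rw [he.neg_one_pow]
      norm_num
    · rw [ho.neg_one_pow]
      norm_num
  rcases mul_eq_zero.mp hcoeff.symm with h | h
  · exact absurd h hunit
  · exact h



/-- support predicate: coefficients vanish off multiples of 5 -/
def Pred5 (f : S5) : Prop := ∀ k : ℕ, ¬ (5 ∣ k) → coeff (R := ZMod 5) k f = 0

lemma pred5_one : Pred5 1 := by
  intro k hk
  rw [PowerSeries.coeff_one, if_neg (by rintro rfl; exact hk ⟨0, rfl⟩)]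

lemma pred5_mul {f g : S5} (hf : Pred5 f) (hg : Pred5 g) : Pred5 (f * g) := by
  intro k hk
  rw [PowerSeries.coeff_mul]
  refine Finset.sum_eq_zero ?_
  rintro ⟨a, b⟩ hab
  have h : a + b = k := Finset.HasAntidiagonal.mem_antidiagonal.mp hab
  rcases em (5 ∣ a) with h5 | h5
  · rw [hg b (by omega), mul_zero]
  · rw [hf a h5, zero_mul]

lemma pred5_factor (i : ℕ) : Pred5 (1 - (X : S5)^(5*i)) := by
  intro k hk
  rw [map_sub, PowerSeries.coeff_one, PowerSeries.coeff_X_pow,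
    if_neg (by rintro rfl; exact hk ⟨0, rfl⟩), if_neg (by rintro rfl; exact hk ⟨i, rfl⟩)]
  norm_num

lemma pred5_inv {Wf B : S5} (hW : Pred5 Wf) (hW0 : constantCoeff (R := ZMod 5) Wf = 1)
    (hinv : B * Wf = 1) : Pred5 B := by
  intro k
  induction k using Nat.strong_induction_on with
  | _ k ih =>
    intro hk
    have h0 : k ≠ 0 := by rintro rfl; exact hk ⟨0, rfl⟩
    have hco := congrArg (PowerSeries.coeff (R := ZMod 5) k) hinv
    rw [PowerSeries.coeff_mul, PowerSeries.coeff_one, if_neg h0] at hco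
    rw [Finset.sum_eq_single (k, 0)] at hco
    · rw [PowerSeries.coeff_zero_eq_constantCoeff, hW0, mul_one] at hco
      exact hco
    · rintro ⟨a, b⟩ hab hne
      have h : a + b = k := Finset.HasAntidiagonal.mem_antidiagonal.mp hab
      rcases em (5 ∣ b) with h5 | h5
      · have hb0 : b ≠ 0 := by
          rintro rfl
          exact hne (by rw [show a = k from by omega])
        rw [ih a (by omega) (by omega), zero_mul]
      · rw [hW b h5, mul_zero]
    · intro hmem
      exact absurd (Finset.HasAntidiagonal.mem_antidiagonal.mpr (by omega : k + 0 = k)) hmem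

lemma icc_range_prod (j : ℕ) (g : ℕ → S5) :
    ∏ i ∈ Icc 1 j, g i = ∏ i ∈ range j, g (i+1) := by
  induction j with
  | zero => simp
  | succ k ih =>
    rw [Finset.prod_Icc_succ_top (by omega : 1 ≤ k+1), ih, Finset.prod_range_succ]

lemma Q_prod (j : ℕ) : Q j = ∏ i ∈ range j, (1 - (X : S5)^(2*(i+1))) := by
  rw [Q, P, map_prod]
  exact Finset.prod_congr rfl (fun i _ => by rw [map_sub, map_one, pp_Xpow])

end D3aux

/-- `elongatedDiamond k n` (written `d_k(n)` in the paper) is the coefficient of `q^n` in the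
formal power series `∏_{i ≥ 1} (1 - q^(2i))^k / ∏_{i ≥ 1} (1 - q^i)^(3k+1)`.
Since every factor with index `i > n` is congruent to `1` modulo `q^(n+1)`, this coefficient
equals the coefficient of `q^n` in the finite product over `1 ≤ i ≤ n`. -/
noncomputable def elongatedDiamond (k n : ℕ) : ℤ :=
  PowerSeries.coeff (R := ℤ) n
    (∏ i ∈ Finset.Icc 1 n,
      ((1 - (PowerSeries.X : PowerSeries ℤ) ^ (2 * i)) ^ k *
        (PowerSeries.invOfUnit (1 - (PowerSeries.X : PowerSeries ℤ) ^ i) 1) ^ (3 * k + 1)))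

namespace D3aux
open Finset PowerSeries

theorem main_dvd (N₀ : ℕ) (h5 : N₀ % 5 = 3 ∨ N₀ % 5 = 4) :
    (5 : ℤ) ∣ elongatedDiamond 3 N₀ := by
  haveI : Fact (Nat.Prime 5) := ⟨by norm_num⟩
  haveI : CharP S5 5 :=
    charP_of_injective_ringHom (f := PowerSeries.C (R := ZMod 5)) PowerSeries.C_injective 5
  rw [show (5:ℤ) = ((5:ℕ):ℤ) from by norm_num, ← ZMod.intCast_zmod_eq_zero_iff_dvd,
    elongatedDiamond]
  set φ : PowerSeries ℤ →+* S5 := PowerSeries.map (Int.castRingHom (ZMod 5)) with hφ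
  have hcast : ∀ f : PowerSeries ℤ, ((PowerSeries.coeff (R := ℤ) N₀ f : ℤ) : ZMod 5)
      = PowerSeries.coeff (R := ZMod 5) N₀ (φ f) := by
    intro f
    rw [hφ, PowerSeries.coeff_map]
    rfl
  rw [hcast]
  rw [map_prod]
  -- the mapped factors
  set J : ℕ → S5 := fun i => φ (PowerSeries.invOfUnit (1 - (X : PowerSeries ℤ)^i) 1) with hJ
  have hfactor : ∀ i ∈ Icc 1 N₀,
      φ ((1 - (X : PowerSeries ℤ) ^ (2 * i)) ^ 3
          * (PowerSeries.invOfUnit (1 - (X : PowerSeries ℤ) ^ i) 1) ^ (3*3+1))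
      = (1 - (X : S5)^(2*i))^3 * (J i)^10 := by
    intro i hi
    rw [map_mul, map_pow, map_pow, map_sub, map_one, map_pow, PowerSeries.map_X]
  rw [Finset.prod_congr rfl hfactor, Finset.prod_mul_distrib]
  -- identify A with (Q N₀)^3
  have hA : ∏ i ∈ Icc 1 N₀, (1 - (X : S5)^(2*i))^3 = (Q N₀)^3 := by
    rw [Finset.prod_pow]
    congr 1
    rw [icc_range_prod N₀ (fun i => 1 - (X : S5)^(2*i)), Q_prod]
  rw [hA]
  -- inverse identities
  have hJi : ∀ i, 1 ≤ i → (1 - (X : S5)^i) * J i = 1 := by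
    intro i hi
    have hz : PowerSeries.constantCoeff (R := ℤ) (1 - (X : PowerSeries ℤ)^i) = 1 := by
      rw [map_sub, map_one, map_pow, PowerSeries.constantCoeff_X, zero_pow (by omega : i ≠ 0),
        sub_zero]
    have h1 : (1 - (X : PowerSeries ℤ)^i)
        * PowerSeries.invOfUnit (1 - (X : PowerSeries ℤ)^i) 1 = 1 :=
      PowerSeries.mul_invOfUnit _ 1 (by rw [hz]; rfl)
    have h2 := congrArg φ h1
    rw [map_mul, map_one] at h2
    have h3 : φ (1 - (X : PowerSeries ℤ)^i) = 1 - (X : S5)^i := by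
      rw [map_sub, map_one, map_pow, PowerSeries.map_X]
    rw [hJ]
    simp only
    rw [← h3]
    exact h2
  -- B * W = 1
  set B : S5 := ∏ i ∈ Icc 1 N₀, (J i)^10 with hB
  set W : S5 := ∏ i ∈ Icc 1 N₀, (1 - (X : S5)^(5*i))^2 with hW
  have hBW : B * W = 1 := by
    rw [hB, hW, ← Finset.prod_mul_distrib]
    refine Finset.prod_eq_one ?_
    intro i hi
    simp only [Finset.mem_Icc] at hi
    have hfrob : (1 - (X : S5)^i)^5 = 1 - (X : S5)^(5*i) := by
      rw [sub_pow_char (R := S5), one_pow, ← pow_mul, mul_comm i 5]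
    rw [← hfrob, ← pow_mul]
    calc J i ^ 10 * (1 - (X:S5)^i)^(5*2)
        = ((1 - (X:S5)^i) * J i)^10 := by rw [mul_pow]; ring_nf
      _ = 1 := by rw [hJi i (by omega), one_pow]
  -- supports
  have hWpred : Pred5 W := by
    rw [hW]
    refine Finset.prod_induction _ Pred5 (fun a b => pred5_mul) pred5_one ?_
    intro i _
    rw [show ((1 - (X : S5)^(5*i))^2) = (1 - (X : S5)^(5*i)) * (1 - (X : S5)^(5*i)) from sq _]
    exact pred5_mul (pred5_factor i) (pred5_factor i)
  have hW0 : constantCoeff (R := ZMod 5) W = 1 := by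
    rw [hW, map_prod]
    refine Finset.prod_eq_one ?_
    intro i hi
    simp only [Finset.mem_Icc] at hi
    rw [map_pow, map_sub, map_one, map_pow, constantCoeff_X, zero_pow (by omega : 5*i ≠ 0),
      sub_zero, one_pow]
  have hBpred : Pred5 B := pred5_inv hWpred hW0 hBW
  -- final coefficient computation
  rw [PowerSeries.coeff_mul]
  refine Finset.sum_eq_zero ?_
  rintro ⟨a, b⟩ hab
  have h : a + b = N₀ := Finset.HasAntidiagonal.mem_antidiagonal.mp hab
  rcases em (5 ∣ b) with h5b | h5b
  · rw [key2 a N₀ (by omega) (by omega), zero_mul]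
  · rw [hBpred b h5b, mul_zero]

end D3aux

theorem d3_mod5_pair (n : ℕ) :
    (5 : ℤ) ∣ elongatedDiamond 3 (5 * n + 3) ∧ (5 : ℤ) ∣ elongatedDiamond 3 (5 * n + 4) :=
  ⟨D3aux.main_dvd _ (Or.inl (by omega)), D3aux.main_dvd _ (Or.inr (by omega))⟩
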